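/- If L^1 and L^2 are weakly log-convex non-quasianalytic sequences with L^1, L^2 ≥ Q for a weakly log-convex sequence Q, then there exists a weakly log-convex non-quasianalytic sequence L with Q ≤ L ≤ L^1 and L ≤ L^2. In particular, taking L to be defined by letting k!L_k be the log-convex minorant of k!·min(L^1_k, L^2_k) works. -/

import Mathlib

/-- `M` is weakly log-convex: `k ↦ log (k! M k)` is convex. -/
def WeaklyLogConvex (M : ℕ → ℝ) : Prop :=
  ∀ k, (((k + 1).factorial : ℝ) * M (k + 1)) ^ 2 ≤
    ((k.factorial : ℝ) * M k) * (((k + 2).factorial : ℝ) * M (k + 2))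

/-- `M` is non-quasianalytic: `∑ 1/(k! M k)^(1/k) < ∞`. -/
def NonQuasianalytic (M : ℕ → ℝ) : Prop :=
  Summable fun k : ℕ => 1 / (((k.factorial : ℝ) * M k) ^ ((1 : ℝ) / k))


open Finset Real

lemma succ_pow_le (k : ℕ) : ((k:ℝ)+1) ^ k ≤ Real.exp 1 * (k:ℝ) ^ k := by
  rcases Nat.eq_zero_or_pos k with h | h
  · subst h; simp
  · have hk : (0:ℝ) < k := by exact_mod_cast h
    have h1 : ((k:ℝ)+1) ≤ (k:ℝ) * Real.exp (1/(k:ℝ)) := by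
      have := Real.add_one_le_exp (1/(k:ℝ))
      calc ((k:ℝ)+1) = (k:ℝ) * (1/(k:ℝ) + 1) := by field_simp; ring
        _ ≤ (k:ℝ) * Real.exp (1/(k:ℝ)) := by
            apply mul_le_mul_of_nonneg_left _ hk.le
            linarith [Real.add_one_le_exp (1/(k:ℝ))]
    calc ((k:ℝ)+1) ^ k ≤ ((k:ℝ) * Real.exp (1/(k:ℝ))) ^ k :=
          pow_le_pow_left₀ (by positivity) h1 k
      _ = (k:ℝ)^k * (Real.exp (1/(k:ℝ)))^k := mul_pow _ _ _
      _ = Real.exp 1 * (k:ℝ)^k := by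
          rw [← Real.exp_nat_mul]
          rw [mul_one_div, div_self (by exact_mod_cast h.ne' : (k:ℝ) ≠ 0)]
          ring

lemma fact_lower (k : ℕ) : ((k:ℝ)/Real.exp 1) ^ k ≤ (k.factorial : ℝ) := by
  induction k with
  | zero => simp
  | succ n ih =>
    have he : (0:ℝ) < Real.exp 1 := Real.exp_pos 1
    have key : ((n:ℝ)+1) ^ n ≤ Real.exp 1 * (n:ℝ) ^ n := succ_pow_le n
    have : (((n:ℝ)+1)/Real.exp 1) ^ (n+1) = ((n:ℝ)+1) * (((n:ℝ)+1)^n / Real.exp 1 ^ (n+1)) := by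
      rw [div_pow]; ring
    rw [Nat.cast_succ, this]
    have h2 : ((n:ℝ)+1)^n / Real.exp 1 ^ (n+1) ≤ (n.factorial : ℝ) := by
      have : ((n:ℝ)+1)^n / Real.exp 1 ^ (n+1) ≤ (Real.exp 1 * (n:ℝ)^n) / Real.exp 1 ^ (n+1) := by
        apply div_le_div_of_nonneg_right key (by positivity) |>.trans_eq rfl
      refine this.trans ?_
      have : (Real.exp 1 * (n:ℝ)^n) / Real.exp 1 ^ (n+1) = ((n:ℝ)/Real.exp 1)^n := by
        rw [div_pow, pow_succ]; field_simp
      rw [this]; exact ih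
    calc ((n:ℝ)+1) * (((n:ℝ)+1)^n / Real.exp 1 ^ (n+1)) ≤ ((n:ℝ)+1) * (n.factorial : ℝ) :=
          mul_le_mul_of_nonneg_left h2 (by positivity)
      _ = ((n+1).factorial : ℝ) := by rw [Nat.factorial_succ]; push_cast; ring

lemma telescope (N : ℕ) : ∑ k ∈ range N, (1:ℝ)/(((k:ℝ)+1)*((k:ℝ)+2)) = 1 - 1/((N:ℝ)+1) := by
  induction N with
  | zero => simp
  | succ n ih =>
    rw [Finset.sum_range_succ, ih]
    push_cast
    have h1 : ((n:ℝ)+1) ≠ 0 := by positivity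
    have h2 : ((n:ℝ)+2) ≠ 0 := by positivity
    field_simp
    ring

lemma tail_bound (i N : ℕ) : ∑ k ∈ Ico i N, (1:ℝ)/(((k:ℝ)+1)*((k:ℝ)+2)) ≤ 1/((i:ℝ)+1) := by
  rcases le_or_gt i N with h | h
  · rw [Finset.sum_Ico_eq_sub _ h, telescope, telescope]
    have : (0:ℝ) ≤ 1/((N:ℝ)+1) := by positivity
    linarith
  · rw [Finset.Ico_eq_empty (by omega)]
    simp
    positivity

lemma swap_lemma (f : ℕ → ℕ → ℝ) (N : ℕ) :
    ∑ k ∈ range N, ∑ i ∈ range (k+1), f i k = ∑ i ∈ range N, ∑ k ∈ Ico i N, f i k := by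
  induction N with
  | zero => simp
  | succ n ih =>
    rw [Finset.sum_range_succ, ih, Finset.sum_range_succ]
    have step : ∀ i ∈ range (n+1), ∑ k ∈ Ico i (n+1), f i k
        = (∑ k ∈ Ico i n, f i k) + f i n := by
      intro i hi
      rw [Finset.mem_range] at hi
      exact Finset.sum_Ico_succ_top (by omega) _
    rw [Finset.sum_congr rfl step, Finset.sum_add_distrib, Finset.sum_range_succ,
      Finset.Ico_self, Finset.sum_empty, add_zero, Finset.sum_range_succ]

lemma fact_rpow_lower (j : ℕ) (hj : 1 ≤ j) :
    (j:ℝ)/Real.exp 1 ≤ (j.factorial : ℝ) ^ ((1:ℝ)/j) := by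
  have hjpos : (0:ℝ) < j := by exact_mod_cast hj
  have h := Real.rpow_le_rpow (by positivity) (fact_lower j) (by positivity : (0:ℝ) ≤ 1/(j:ℝ))
  calc (j:ℝ)/Real.exp 1
      = (((j:ℝ)/Real.exp 1) ^ (j:ℕ)) ^ ((1:ℝ)/j) := by
        rw [← Real.rpow_natCast ((j:ℝ)/Real.exp 1) j, ← Real.rpow_mul (by positivity)]
        rw [mul_one_div, div_self hjpos.ne', Real.rpow_one]
    _ ≤ (j.factorial : ℝ) ^ ((1:ℝ)/j) := h

lemma carleman_point (t : ℕ → ℝ) (ht : ∀ i, 0 < t i) (j : ℕ) (hj : 1 ≤ j) :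
    (∏ i ∈ range j, t i) ^ ((1:ℝ)/j)
      ≤ Real.exp 1 * (∑ i ∈ range j, (((i:ℝ)+1) * t i)) / (j:ℝ)^2 := by
  have hjpos : (0:ℝ) < j := by exact_mod_cast hj
  set S := ∑ i ∈ range j, (((i:ℝ)+1) * t i) with hS
  have hSpos : 0 < S := Finset.sum_pos (fun i _ => mul_pos (by positivity) (ht i))
    (Finset.nonempty_range_iff.mpr (by omega))
  have hfact : (∏ i ∈ range j, (((i:ℝ)+1) * t i)) = (j.factorial : ℝ) * ∏ i ∈ range j, t i := by
    rw [Finset.prod_mul_distrib]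
    congr 1
    exact_mod_cast Finset.prod_range_add_one_eq_factorial j
  have hAM : (∏ i ∈ range j, (((i:ℝ)+1) * t i)) ^ ((1:ℝ)/j) ≤ S / j := by
    rw [← Real.finset_prod_rpow _ _ (fun i _ => mul_nonneg (by positivity) (ht i).le) _]
    have := Real.geom_mean_le_arith_mean_weighted (range j) (fun _ => (1:ℝ)/j)
      (fun i => ((i:ℝ)+1) * t i) (fun i _ => by positivity)
      (by rw [Finset.sum_const, Finset.card_range, nsmul_eq_mul]; field_simp)
      (fun i _ => mul_nonneg (by positivity) (ht i).le)
    refine this.trans_eq ?_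
    rw [← Finset.mul_sum (range j) (fun i => ((i:ℝ)+1)*t i) ((1:ℝ)/j)]
    rw [hS, one_div, inv_mul_eq_div]
  have hprod : (∏ i ∈ range j, t i) ^ ((1:ℝ)/j)
      = (∏ i ∈ range j, (((i:ℝ)+1) * t i)) ^ ((1:ℝ)/j) / (j.factorial:ℝ) ^ ((1:ℝ)/j) := by
    rw [hfact, Real.mul_rpow (by positivity) (Finset.prod_nonneg (fun i _ => (ht i).le))]
    field_simp
  rw [hprod]
  have hfr := fact_rpow_lower j hj
  have he : (0:ℝ) < (j:ℝ)/Real.exp 1 := by positivity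
  calc (∏ i ∈ range j, (((i:ℝ)+1) * t i)) ^ ((1:ℝ)/j) / (j.factorial:ℝ) ^ ((1:ℝ)/j)
      ≤ (S/j) / ((j:ℝ)/Real.exp 1) :=
        div_le_div₀ (by positivity) hAM he hfr
    _ = Real.exp 1 * S / (j:ℝ)^2 := by field_simp

lemma carleman (t : ℕ → ℝ) (ht : ∀ i, 0 < t i) (hsum : Summable t) :
    Summable fun k : ℕ => (∏ i ∈ range k, t i) ^ ((1:ℝ)/k) := by
  set T := ∑' i, t i with hT
  have hTb : ∀ N, ∑ i ∈ range N, t i ≤ T :=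
    fun N => Summable.sum_le_tsum (range N) (fun i _ => (ht i).le) hsum
  rw [← summable_nat_add_iff 1]
  apply summable_of_sum_range_le (c := 2 * Real.exp 1 * T)
  · intro n
    exact Real.rpow_nonneg (Finset.prod_nonneg (fun i _ => (ht i).le)) _
  · intro N
    have hpt : ∀ k ∈ range N, (∏ i ∈ range (k+1), t i) ^ ((1:ℝ)/(((k+1:ℕ)):ℝ))
        ≤ ∑ i ∈ range (k+1), (((i:ℝ)+1) * t i) * (2 * Real.exp 1 / (((k:ℝ)+1)*((k:ℝ)+2))) := by
      intro k _
      have h1 := carleman_point t ht (k+1) (by omega)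
      push_cast at h1 ⊢
      refine h1.trans ?_
      rw [← Finset.sum_mul]
      have hSpos : (0:ℝ) < ∑ i ∈ range (k+1), (((i:ℝ)+1) * t i) :=
        Finset.sum_pos (fun i _ => mul_pos (by positivity) (ht i)) Finset.nonempty_range_add_one
      have h2 : (1:ℝ)/(((k:ℝ)+1)^2) ≤ 2/(((k:ℝ)+1)*((k:ℝ)+2)) := by
        rw [div_le_div_iff₀ (by positivity) (by positivity)]
        nlinarith [Nat.cast_nonneg (α := ℝ) k]
      calc Real.exp 1 * (∑ i ∈ range (k+1), (((i:ℝ)+1) * t i)) / ((k:ℝ)+1)^2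
          = (Real.exp 1 * (∑ i ∈ range (k+1), (((i:ℝ)+1) * t i))) * (1/((k:ℝ)+1)^2) := by ring
        _ ≤ (Real.exp 1 * (∑ i ∈ range (k+1), (((i:ℝ)+1) * t i))) * (2/(((k:ℝ)+1)*((k:ℝ)+2))) :=
            mul_le_mul_of_nonneg_left h2 (mul_nonneg (Real.exp_pos 1).le hSpos.le)
        _ = (∑ i ∈ range (k+1), (((i:ℝ)+1) * t i)) * (2 * Real.exp 1 / (((k:ℝ)+1)*((k:ℝ)+2))) := by
            ring
    calc ∑ k ∈ range N, (∏ i ∈ range (k+1), t i) ^ ((1:ℝ)/((k+1:ℕ):ℝ))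
        ≤ ∑ k ∈ range N, ∑ i ∈ range (k+1), (((i:ℝ)+1) * t i) * (2 * Real.exp 1 / (((k:ℝ)+1)*((k:ℝ)+2))) :=
          Finset.sum_le_sum hpt
      _ = ∑ i ∈ range N, ∑ k ∈ Ico i N, (((i:ℝ)+1) * t i) * (2 * Real.exp 1 / (((k:ℝ)+1)*((k:ℝ)+2))) :=
          swap_lemma _ N
      _ ≤ ∑ i ∈ range N, 2 * Real.exp 1 * t i := by
          apply Finset.sum_le_sum
          intro i _
          have h2 : ∑ k ∈ Ico i N, (((i:ℝ)+1) * t i) * (2 * Real.exp 1 / (((k:ℝ)+1)*((k:ℝ)+2)))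
              = ((i:ℝ)+1) * t i * (2 * Real.exp 1) * ∑ k ∈ Ico i N, (1:ℝ)/(((k:ℝ)+1)*((k:ℝ)+2)) := by
            rw [Finset.mul_sum]
            apply Finset.sum_congr rfl
            intro k _
            field_simp
          rw [h2]
          have h3 := tail_bound i N
          have h4 : ((i:ℝ)+1) * t i * (2*Real.exp 1) * (1/((i:ℝ)+1)) = 2 * Real.exp 1 * t i := by
            field_simp
          calc ((i:ℝ)+1) * t i * (2 * Real.exp 1) * ∑ k ∈ Ico i N, (1:ℝ)/(((k:ℝ)+1)*((k:ℝ)+2))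
              ≤ ((i:ℝ)+1) * t i * (2*Real.exp 1) * (1/((i:ℝ)+1)) := by
                exact mul_le_mul_of_nonneg_left h3
                  (mul_nonneg (mul_nonneg (by positivity) (ht i).le) (by positivity))
            _ = 2 * Real.exp 1 * t i := h4
      _ = 2 * Real.exp 1 * ∑ i ∈ range N, t i := by rw [Finset.mul_sum]
      _ ≤ 2 * Real.exp 1 * T := by
          apply mul_le_mul_of_nonneg_left (hTb N) (by positivity)

lemma ratio_summable (a : ℕ → ℝ) (ha : ∀ k, 0 < a k)
    (hconv : ∀ k, a (k+1)^2 ≤ a k * a (k+2))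
    (hsum : Summable fun k : ℕ => 1 / a k ^ ((1:ℝ)/k)) :
    Summable fun k => a k / a (k+1) := by
  set ρ : ℕ → ℝ := fun k => a (k+1) / a k with hρ
  have hρpos : ∀ k, 0 < ρ k := fun k => div_pos (ha (k+1)) (ha k)
  have hρmono : ∀ k, ρ k ≤ ρ (k+1) := by
    intro k
    rw [hρ, div_le_div_iff₀ (ha k) (ha (k+1))]
    nlinarith [hconv k]
  have key : ∀ k, a (k+1) ≤ a 0 * ρ k ^ (k+1) := by
    intro k
    induction k with
    | zero =>
        simp only [hρ]
        rw [pow_one, mul_div_cancel₀ _ (ha 0).ne']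
    | succ n ih =>
      have h1 : a (n+2) = a (n+1) * ρ (n+1) := by
        simp only [hρ]
        rw [mul_div_cancel₀ _ (ha (n+1)).ne']
      rw [h1]
      calc a (n+1) * ρ (n+1) ≤ (a 0 * ρ n ^ (n+1)) * ρ (n+1) :=
            mul_le_mul_of_nonneg_right ih (hρpos (n+1)).le
        _ ≤ (a 0 * ρ (n+1) ^ (n+1)) * ρ (n+1) := by
            have := pow_le_pow_left₀ (hρpos n).le (hρmono n) (n+1)
            have := mul_le_mul_of_nonneg_left this (ha 0).le
            nlinarith [hρpos (n+1)]
        _ = a 0 * ρ (n+1) ^ (n+2) := by ring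
  set C : ℝ := max 1 (a 0) with hC
  have hbound : ∀ k, a k / a (k+1) ≤ C * (1 / a (k+1) ^ ((1:ℝ)/((k+1:ℕ):ℝ))) := by
    intro k
    have hk1 : (0:ℝ) < ((k:ℝ)+1) := by positivity
    have h1 : a (k+1) ^ ((1:ℝ)/((k:ℝ)+1)) ≤ a 0 ^ ((1:ℝ)/((k:ℝ)+1)) * ρ k := by
      have h2 := Real.rpow_le_rpow (ha (k+1)).le (key k) (by positivity : (0:ℝ) ≤ 1/((k:ℝ)+1))
      refine h2.trans_eq ?_
      rw [Real.mul_rpow (ha 0).le (pow_nonneg (hρpos k).le _)]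
      congr 1
      rw [← Real.rpow_natCast (ρ k) (k+1), ← Real.rpow_mul (hρpos k).le]
      push_cast
      rw [mul_one_div, div_self hk1.ne', Real.rpow_one]
    have hA : (0:ℝ) < a (k+1) ^ ((1:ℝ)/((k:ℝ)+1)) := Real.rpow_pos_of_pos (ha (k+1)) _
    have hinv : a k / a (k+1) = 1 / ρ k := by
      rw [hρ, one_div_div]
    rw [hinv]
    have hCb : a 0 ^ ((1:ℝ)/((k:ℝ)+1)) ≤ C := by
      rcases le_total (a 0) 1 with h | h
      · exact le_trans (Real.rpow_le_one (ha 0).le h (by positivity)) (le_max_left _ _)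
      · refine le_trans ?_ (le_max_right _ _)
        calc a 0 ^ ((1:ℝ)/((k:ℝ)+1)) ≤ a 0 ^ (1:ℝ) :=
              Real.rpow_le_rpow_of_exponent_le h (by rw [div_le_one hk1]; linarith)
          _ = a 0 := Real.rpow_one _
    have h3 : 1 / ρ k ≤ a 0 ^ ((1:ℝ)/((k:ℝ)+1)) / a (k+1) ^ ((1:ℝ)/((k:ℝ)+1)) := by
      rw [div_le_div_iff₀ (hρpos k) hA, one_mul]
      calc a (k+1) ^ ((1:ℝ)/((k:ℝ)+1)) ≤ a 0 ^ ((1:ℝ)/((k:ℝ)+1)) * ρ k := h1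
        _ = a 0 ^ ((1:ℝ)/((k:ℝ)+1)) * ρ k := rfl
    refine h3.trans ?_
    have : ((k+1:ℕ):ℝ) = (k:ℝ)+1 := by push_cast; ring
    rw [this]
    rw [mul_one_div]
    exact div_le_div₀ (le_trans zero_le_one (le_max_left 1 (a 0))) hCb hA le_rfl
  have hshift : Summable fun k : ℕ => C * (1 / a (k+1) ^ ((1:ℝ)/((k+1:ℕ):ℝ))) := by
    apply Summable.mul_left
    exact (_root_.summable_nat_add_iff (f := fun k : ℕ => 1 / a k ^ ((1:ℝ)/(k:ℝ))) 1).2 hsum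
  exact Summable.of_nonneg_of_le (fun k => div_nonneg (ha k).le (ha (k+1)).le) hbound hshift


/-- Two weakly log-convex non-quasianalytic majorants of a weakly log-convex `Q`
admit a common weakly log-convex non-quasianalytic minorant above `Q`. -/
theorem stmt10 (Q L1 L2 : ℕ → ℝ)
    (hQpos : ∀ k, 0 < Q k) (h1pos : ∀ k, 0 < L1 k) (h2pos : ∀ k, 0 < L2 k)
    (hQw : WeaklyLogConvex Q) (h1w : WeaklyLogConvex L1) (h2w : WeaklyLogConvex L2)
    (h1nq : NonQuasianalytic L1) (h2nq : NonQuasianalytic L2)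
    (hQ1 : ∀ k, Q k ≤ L1 k) (hQ2 : ∀ k, Q k ≤ L2 k) :
    ∃ L : ℕ → ℝ, (∀ k, 0 < L k) ∧ WeaklyLogConvex L ∧ NonQuasianalytic L ∧
      (∀ k, Q k ≤ L k) ∧ (∀ k, L k ≤ L1 k) ∧ (∀ k, L k ≤ L2 k) := by
  set a : ℕ → ℝ := fun k => (k.factorial : ℝ) * L1 k with ha_def
  set b : ℕ → ℝ := fun k => (k.factorial : ℝ) * L2 k with hb_def
  set q : ℕ → ℝ := fun k => (k.factorial : ℝ) * Q k with hq_def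
  have hfpos : ∀ k : ℕ, (0:ℝ) < (k.factorial : ℝ) := fun k => by
    exact_mod_cast Nat.factorial_pos k
  have hapos : ∀ k, 0 < a k := fun k => mul_pos (hfpos k) (h1pos k)
  have hbpos : ∀ k, 0 < b k := fun k => mul_pos (hfpos k) (h2pos k)
  have hqpos : ∀ k, 0 < q k := fun k => mul_pos (hfpos k) (hQpos k)
  have haconv : ∀ k, a (k+1)^2 ≤ a k * a (k+2) := h1w
  have hbconv : ∀ k, b (k+1)^2 ≤ b k * b (k+2) := h2w
  have hqconv : ∀ k, q (k+1)^2 ≤ q k * q (k+2) := hQw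
  set r : ℕ → ℝ := fun k => min (a (k+1) / a k) (b (k+1) / b k) with hr_def
  have hrpos : ∀ k, 0 < r k :=
    fun k => lt_min (div_pos (hapos (k+1)) (hapos k)) (div_pos (hbpos (k+1)) (hbpos k))
  have hamono : ∀ k, a (k+1) / a k ≤ a (k+2) / a (k+1) := by
    intro k
    rw [div_le_div_iff₀ (hapos k) (hapos (k+1))]
    nlinarith [haconv k]
  have hbmono : ∀ k, b (k+1) / b k ≤ b (k+2) / b (k+1) := by
    intro k
    rw [div_le_div_iff₀ (hbpos k) (hbpos (k+1))]
    nlinarith [hbconv k]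
  have hrmono : ∀ k, r k ≤ r (k+1) := by
    intro k
    exact le_min ((min_le_left _ _).trans (hamono k)) ((min_le_right _ _).trans (hbmono k))
  set m : ℕ → ℝ := fun k => min (a 0) (b 0) * ∏ i ∈ range k, r i with hm_def
  have hm0pos : 0 < min (a 0) (b 0) := lt_min (hapos 0) (hbpos 0)
  have hmpos : ∀ k, 0 < m k :=
    fun k => mul_pos hm0pos (Finset.prod_pos (fun i _ => hrpos i))
  have hmsucc : ∀ k, m (k+1) = m k * r k := by
    intro k
    simp only [hm_def, Finset.prod_range_succ]
    ring
  have hma : ∀ k, m k ≤ a k := by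
    intro k
    induction k with
    | zero => simp only [hm_def, Finset.range_zero, Finset.prod_empty, mul_one]; exact min_le_left _ _
    | succ n ih =>
      rw [hmsucc n]
      calc m n * r n ≤ a n * (a (n+1) / a n) :=
            mul_le_mul ih (min_le_left _ _) (hrpos n).le (hapos n).le
        _ = a (n+1) := mul_div_cancel₀ _ (hapos n).ne'
  have hmb : ∀ k, m k ≤ b k := by
    intro k
    induction k with
    | zero => simp only [hm_def, Finset.range_zero, Finset.prod_empty, mul_one]; exact min_le_right _ _
    | succ n ih =>
      rw [hmsucc n]
      calc m n * r n ≤ b n * (b (n+1) / b n) :=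
            mul_le_mul ih (min_le_right _ _) (hrpos n).le (hbpos n).le
        _ = b (n+1) := mul_div_cancel₀ _ (hbpos n).ne'
  have hmconv : ∀ k, m (k+1)^2 ≤ m k * m (k+2) := by
    intro k
    have e1 := hmsucc k
    have e2 := hmsucc (k+1)
    rw [e2, e1]
    have := hrmono k
    nlinarith [hmpos k, hrpos k, hrpos (k+1)]
  -- summability of t = 1/r
  set t : ℕ → ℝ := fun k => 1 / r k with ht_def
  have htpos : ∀ k, 0 < t k := fun k => div_pos one_pos (hrpos k)
  have htsum : Summable t := by
    have hA := ratio_summable a hapos haconv h1nq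
    have hB := ratio_summable b hbpos hbconv h2nq
    apply Summable.of_nonneg_of_le (fun k => (htpos k).le)
      (f := fun k => a k / a (k+1) + b k / b (k+1)) _ (hA.add hB)
    intro k
    beta_reduce
    have h1 : t k = max (a k / a (k+1)) (b k / b (k+1)) := by
      simp only [ht_def, hr_def]
      rcases min_choice (a (k+1) / a k) (b (k+1) / b k) with h | h <;> rw [h]
      · rw [one_div_div]
        rw [max_eq_left]
        rw [div_le_div_iff₀ (hbpos (k+1)) (hapos (k+1))]
        have := min_eq_left_iff.mp h
        rw [div_le_div_iff₀ (hapos k) (hbpos k)] at this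
        nlinarith
      · rw [one_div_div]
        rw [max_eq_right]
        rw [div_le_div_iff₀ (hapos (k+1)) (hbpos (k+1))]
        have := min_eq_right_iff.mp h
        rw [div_le_div_iff₀ (hbpos k) (hapos k)] at this
        nlinarith
    rw [h1]
    apply max_le_iff.mpr
    constructor
    · nlinarith [div_pos (hbpos k) (hbpos (k+1))]
    · nlinarith [div_pos (hapos k) (hapos (k+1))]
  -- non-quasianalyticity of m
  set D : ℝ := max 1 (1 / min (a 0) (b 0)) with hD_def
  have hDpos : 0 < D := lt_of_lt_of_le zero_lt_one (le_max_left _ _)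
  have hmNQ : Summable fun k : ℕ => 1 / m k ^ ((1:ℝ)/(k:ℝ)) := by
    apply Summable.of_nonneg_of_le
      (g := fun k : ℕ => 1 / m k ^ ((1:ℝ)/(k:ℝ)))
      (fun k => (div_pos one_pos (Real.rpow_pos_of_pos (hmpos k) _)).le)
      (f := fun k : ℕ => D * ((∏ i ∈ range k, t i) ^ ((1:ℝ)/(k:ℝ))))
      _ ((carleman t htpos htsum).mul_left D)
    intro k
    beta_reduce
    have hprodr : (0:ℝ) < ∏ i ∈ range k, r i := Finset.prod_pos (fun i _ => hrpos i)
    have key : (1:ℝ) / m k ^ ((1:ℝ)/(k:ℝ))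
        = (1 / min (a 0) (b 0)) ^ ((1:ℝ)/(k:ℝ)) * ((∏ i ∈ range k, t i) ^ ((1:ℝ)/(k:ℝ))) := by
      have h2 : ∏ i ∈ range k, t i = 1 / ∏ i ∈ range k, r i := by
        simp only [ht_def, one_div]
        rw [← Finset.prod_inv_distrib]
      rw [h2]
      rw [← Real.mul_rpow (div_nonneg zero_le_one hm0pos.le)
        (div_nonneg zero_le_one hprodr.le)]
      have h3 : 1 / min (a 0) (b 0) * (1 / ∏ i ∈ range k, r i) = 1 / m k := by
        simp only [hm_def]
        field_simp
      rw [h3]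
      rw [one_div (m k), Real.inv_rpow (hmpos k).le, ← one_div]
    rw [key]
    apply mul_le_mul_of_nonneg_right _
      (Real.rpow_nonneg (Finset.prod_nonneg (fun i _ => (htpos i).le)) _)
    rcases le_total (1 / min (a 0) (b 0)) 1 with h | h
    · exact le_trans (Real.rpow_le_one (div_nonneg zero_le_one hm0pos.le) h (by positivity))
        (le_max_left _ _)
    · refine le_trans ?_ (le_max_right _ _)
      calc (1 / min (a 0) (b 0)) ^ ((1:ℝ)/(k:ℝ)) ≤ (1 / min (a 0) (b 0)) ^ (1:ℝ) := by
            apply Real.rpow_le_rpow_of_exponent_le h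
            rcases Nat.eq_zero_or_pos k with hk | hk
            · subst hk; norm_num
            · rw [div_le_one (by exact_mod_cast hk)]
              exact_mod_cast hk
        _ = 1 / min (a 0) (b 0) := Real.rpow_one _
  -- the minorant
  refine ⟨fun k => max (Q k) (m k / (k.factorial : ℝ)), ?_, ?_, ?_, ?_, ?_, ?_⟩
  · intro k
    exact lt_of_lt_of_le (hQpos k) (le_max_left _ _)
  · intro k
    have klk : ∀ j : ℕ, ((j.factorial : ℝ)) * max (Q j) (m j / (j.factorial : ℝ)) = max (q j) (m j) := by
      intro j
      rw [mul_max_of_nonneg _ _ (hfpos j).le]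
      congr 1
      rw [mul_div_cancel₀ _ (hfpos j).ne']
    show (((k+1).factorial : ℝ) * max (Q (k+1)) (m (k+1) / ((k+1).factorial : ℝ))) ^ 2 ≤ _
    rw [klk (k+1), klk k, klk (k+2)]
    have hq := hqconv k
    have hm := hmconv k
    rcases max_choice (q (k+1)) (m (k+1)) with h | h <;> rw [h]
    · calc q (k+1) ^ 2 ≤ q k * q (k+2) := hq
        _ ≤ max (q k) (m k) * max (q (k+2)) (m (k+2)) :=
            mul_le_mul (le_max_left _ _) (le_max_left _ _) (hqpos (k+2)).le
              (le_trans (hqpos k).le (le_max_left _ _))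
    · calc m (k+1) ^ 2 ≤ m k * m (k+2) := hm
        _ ≤ max (q k) (m k) * max (q (k+2)) (m (k+2)) :=
            mul_le_mul (le_max_right _ _) (le_max_right _ _) (hmpos (k+2)).le
              (le_trans (hqpos k).le (le_max_left _ _))
  · -- non-quasianalyticity
    show Summable fun k : ℕ =>
      1 / (((k.factorial : ℝ) * max (Q k) (m k / (k.factorial : ℝ))) ^ ((1:ℝ)/(k:ℝ)))
    have hLpos : ∀ k : ℕ, (0:ℝ) < (k.factorial : ℝ) * max (Q k) (m k / (k.factorial : ℝ)) :=
      fun k => mul_pos (hfpos k) (lt_of_lt_of_le (hQpos k) (le_max_left _ _))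
    apply Summable.of_nonneg_of_le
      (fun k => (div_pos one_pos (Real.rpow_pos_of_pos (hLpos k) _)).le)
      (f := fun k : ℕ => 1 / m k ^ ((1:ℝ)/(k:ℝ))) _ hmNQ
    intro k
    beta_reduce
    have klk : ((k.factorial : ℝ)) * max (Q k) (m k / (k.factorial : ℝ)) = max (q k) (m k) := by
      rw [mul_max_of_nonneg _ _ (hfpos k).le]
      congr 1
      rw [mul_div_cancel₀ _ (hfpos k).ne']
    rw [klk]
    apply one_div_le_one_div_of_le (Real.rpow_pos_of_pos (hmpos k) _)
    exact Real.rpow_le_rpow (hmpos k).le (le_max_right _ _) (by positivity)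
  · intro k
    exact le_max_left _ _
  · intro k
    apply max_le (hQ1 k)
    rw [div_le_iff₀ (hfpos k)]
    calc m k ≤ a k := hma k
      _ = L1 k * (k.factorial : ℝ) := by rw [ha_def]; ring
  · intro k
    apply max_le (hQ2 k)
    rw [div_le_iff₀ (hfpos k)]
    calc m k ≤ b k := hmb k
      _ = L2 k * (k.factorial : ℝ) := by rw [hb_def]; ring
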